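/- Let σ ≥ 1, let M be a collection of m ≥ 1 pairwise distinct finite subsets of {0,…,σ−1}, and let P be a prime with P ≥ m²σ. Then the number of integers X ∈ [1, P−1] for which the map S ↦ h_X(S) is not injective on M is at most (σ−1)·m(m−1)/2, which is at most (P−1)/2. In particular, a uniformly random X ∈ [1, P−1] makes h_X injective on M with probability at least 1/2. -/

import Mathlib

open Polynomial

theorem bad_hash_count_le {σ m P : ℕ} (hσ : 1 ≤ σ) (hm : 1 ≤ m)
    (hP : P.Prime) (hPge : m ^ 2 * σ ≤ P)
    (M : Finset (Finset ℕ)) (hM : ∀ S ∈ M, S ⊆ Finset.range σ)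
    (hcard : M.card = m) :
    {X : ℕ | X ∈ Finset.Icc 1 (P - 1) ∧
        ¬ Set.InjOn (fun S : Finset ℕ => ∑ e ∈ S, (X : ZMod P) ^ e) ↑M}.ncard ≤
      (σ - 1) * (m * (m - 1)) / 2 ∧
    (σ - 1) * (m * (m - 1)) / 2 ≤ (P - 1) / 2 := by
  classical
  haveI : Fact P.Prime := ⟨hP⟩
  obtain ⟨a, rfl⟩ : ∃ a, σ = a + 1 := ⟨σ - 1, (Nat.succ_pred_eq_of_pos hσ).symm⟩
  obtain ⟨b, rfl⟩ : ∃ b, m = b + 1 := ⟨m - 1, (Nat.succ_pred_eq_of_pos hm).symm⟩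
  have hσ1 : a + 1 - 1 = a := rfl
  have hm1 : b + 1 - 1 = b := rfl
  rw [hσ1, hm1] at *
  have hmm_even : 2 ∣ (b + 1) * b := by
    rcases Nat.even_or_odd b with h | h
    · exact Dvd.dvd.mul_left h.two_dvd _
    · exact Dvd.dvd.mul_right h.add_one.two_dvd _
  constructor
  · -- main counting bound
    -- polynomial attached to a set
    set f : Finset ℕ → Polynomial (ZMod P) := fun S => ∑ e ∈ S, Polynomial.X ^ e with hf
    have hcoeff : ∀ S k, (f S).coeff k = if k ∈ S then 1 else 0 := by
      intro S k
      simp [hf, Polynomial.finset_sum_coeff, Polynomial.coeff_X_pow]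
    have hfinj : Function.Injective f := by
      intro S T hST
      ext k
      have := congrArg (fun p => Polynomial.coeff p k) hST
      simp only [hcoeff] at this
      by_contra hk
      rcases Classical.em (k ∈ S) with h1 | h1 <;> rcases Classical.em (k ∈ T) with h2 | h2 <;>
        simp [h1, h2] at this hk
    have hdeg : ∀ S, S ∈ M → (f S).natDegree ≤ a := by
      intro S hS
      apply Polynomial.natDegree_sum_le_of_forall_le
      intro e he
      have : e < a + 1 := Finset.mem_range.mp (hM S hS he)
      simpa using Nat.lt_succ_iff.mp this
    set enc : Finset ℕ → ℕ := Encodable.encode with henc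
    have hencinj : Function.Injective enc := Encodable.encode_injective
    set Pr : Finset (Finset ℕ × Finset ℕ) :=
      M.offDiag.filter (fun p => enc p.1 < enc p.2) with hPr
    -- card of Pr
    have hPr2 : 2 * Pr.card ≤ (b + 1) * b := by
      have hswap : Pr.card ≤ (M.offDiag.filter (fun p => ¬ enc p.1 < enc p.2)).card := by
        apply Finset.card_le_card_of_injOn (fun p => (p.2, p.1))
        · intro p hp
          simp only [hPr, Finset.mem_coe, Finset.mem_filter, Finset.mem_offDiag] at hp ⊢
          refine ⟨⟨hp.1.2.1, hp.1.1, fun h => hp.1.2.2 h.symm⟩, by omega⟩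
        · intro p _ q _ h
          exact Prod.ext (congrArg Prod.snd h) (congrArg Prod.fst h)
      have hsum := Finset.card_filter_add_card_filter_not
        (s := M.offDiag) (p := fun p => enc p.1 < enc p.2)
      rw [← hPr] at hsum
      have hod : M.offDiag.card = (b + 1) * b := by
        rw [Finset.offDiag_card, hcard]; ring_nf; omega
      omega
    have hPrle : Pr.card ≤ (b + 1) * b / 2 := Nat.le_div_iff_mul_le (by norm_num) |>.mpr (by omega)
    -- roots finset
    set R : Finset (ZMod P) := Pr.biUnion (fun p => (f p.1 - f p.2).roots.toFinset) with hR
    set Bf : Finset ℕ := (Finset.Icc 1 (P - 1)).filter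
      (fun X => ¬ Set.InjOn (fun S : Finset ℕ => ∑ e ∈ S, (X : ZMod P) ^ e) ↑M) with hBf
    have hBeq : {X : ℕ | X ∈ Finset.Icc 1 (P - 1) ∧
        ¬ Set.InjOn (fun S : Finset ℕ => ∑ e ∈ S, (X : ZMod P) ^ e) ↑M} = ↑Bf := by
      ext X; simp [hBf]
    rw [hBeq, Set.ncard_coe_finset]
    have hcast : Bf.card ≤ R.card := by
      apply Finset.card_le_card_of_injOn (fun X : ℕ => (X : ZMod P))
      · intro X hX
        simp only [hBf, Finset.mem_coe, Finset.mem_filter] at hX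
        obtain ⟨hXmem, hninj⟩ := hX
        rw [Set.InjOn] at hninj
        push_neg at hninj
        obtain ⟨S, hS, T, hT, hhash, hne⟩ := hninj
        rw [Finset.mem_coe] at hS hT
        have hne' : S ≠ T := hne
        have hroot : ∀ U V : Finset ℕ, U ∈ M → V ∈ M → U ≠ V →
            (∑ e ∈ U, (X : ZMod P) ^ e) = (∑ e ∈ V, (X : ZMod P) ^ e) →
            enc U < enc V → (X : ZMod P) ∈ R := by
          intro U V hU hV hUV hhash' hlt
          rw [hR, Finset.mem_biUnion]
          refine ⟨(U, V), ?_, ?_⟩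
          · simp only [hPr, Finset.mem_filter, Finset.mem_offDiag]
            exact ⟨⟨hU, hV, hUV⟩, hlt⟩
          · rw [Multiset.mem_toFinset, Polynomial.mem_roots']
            constructor
            · exact sub_ne_zero.mpr (fun h => hUV (hfinj h))
            · simp only [Polynomial.IsRoot, Polynomial.eval_sub, hf,
                Polynomial.eval_finset_sum, Polynomial.eval_pow, Polynomial.eval_X]
              rw [hhash']; ring
        rcases lt_trichotomy (enc S) (enc T) with h | h | h
        · exact hroot S T hS hT hne' hhash h
        · exact absurd (hencinj h) hne'
        · exact hroot T S hT hS (Ne.symm hne') hhash.symm h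
      · intro X hX Y hY hXY
        have hX2 := (Finset.mem_Icc.mp (Finset.mem_filter.mp hX).1).2
        have hY2 := (Finset.mem_Icc.mp (Finset.mem_filter.mp hY).1).2
        have hXP : X < P := by have := hP.one_lt; omega
        have hYP : Y < P := by have := hP.one_lt; omega
        have := congrArg ZMod.val hXY
        rwa [ZMod.val_natCast_of_lt hXP, ZMod.val_natCast_of_lt hYP] at this
    have hRcard : R.card ≤ Pr.card * a := by
      calc R.card ≤ ∑ p ∈ Pr, (f p.1 - f p.2).roots.toFinset.card :=
            Finset.card_biUnion_le
        _ ≤ ∑ p ∈ Pr, a := by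
            apply Finset.sum_le_sum
            intro p hp
            simp only [hPr, Finset.mem_filter, Finset.mem_offDiag] at hp
            calc (f p.1 - f p.2).roots.toFinset.card
                ≤ Multiset.card (f p.1 - f p.2).roots := Multiset.toFinset_card_le _
              _ ≤ (f p.1 - f p.2).natDegree := Polynomial.card_roots' _
              _ ≤ max (f p.1).natDegree (f p.2).natDegree := Polynomial.natDegree_sub_le _ _
              _ ≤ a := max_le (hdeg _ hp.1.1) (hdeg _ hp.1.2.1)
        _ = Pr.card * a := by rw [Finset.sum_const, smul_eq_mul]
    calc Bf.card ≤ Pr.card * a := le_trans hcast hRcard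
      _ ≤ ((b + 1) * b / 2) * a := Nat.mul_le_mul_right _ hPrle
      _ = a * ((b + 1) * b) / 2 := by rw [Nat.mul_div_assoc a hmm_even]; ring
  · -- arithmetic bound
    apply Nat.div_le_div_right
    have h1 : a * ((b + 1) * b) + 1 ≤ (b + 1) ^ 2 * (a + 1) := by nlinarith
    omega
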